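/- Let U ⊆ Mat₃(ℂ) be the 3-dimensional space {[[t,s,u],[s,0,0],[u,0,0]] : s,t,u ∈ ℂ}. Then the rank of U (the smallest r such that U lies in the span of r rank-one matrices) equals 5. -/

import Mathlib

open Matrix

/-- Determinant of a sum of two rank-one (outer product) 3×3 matrices vanishes. -/
lemma det_sum_two_vecMulVec (x y z w : Fin 3 → ℂ) :
    (vecMulVec x y + vecMulVec z w).det = 0 := by
  simp only [Matrix.det_fin_three, Matrix.add_apply, vecMulVec_apply]
  ring

lemma vecMulVec_ne_zero {x y : Fin 3 → ℂ} (k l : Fin 3) (h : x k * y l ≠ 0) :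
    vecMulVec x y ≠ (0 : Matrix (Fin 3) (Fin 3) ℂ) := fun h0 => by
  apply h
  have := Matrix.ext_iff.mpr h0 k l
  simpa [vecMulVec_apply] using this

lemma rank_vecMulVec_eq_one {x y : Fin 3 → ℂ}
    (h : vecMulVec x y ≠ (0 : Matrix (Fin 3) (Fin 3) ℂ)) :
    (vecMulVec x y).rank = 1 := by
  refine le_antisymm ?_ ?_
  · calc (vecMulVec x y).rank = (replicateCol (Fin 1) x * replicateRow (Fin 1) y).rank := by
          rw [vecMulVec_eq (Fin 1)]; rfl
      _ ≤ (replicateCol (Fin 1) x).rank := Matrix.rank_mul_le_left _ _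
      _ ≤ 1 := by simpa using Matrix.rank_le_card_width (replicateCol (Fin 1) x)
  · rw [Nat.one_le_iff_ne_zero]
    intro h0
    apply h
    rw [Matrix.rank] at h0
    have hbot : LinearMap.range (vecMulVec x y).mulVecLin = ⊥ :=
      Submodule.finrank_eq_zero.mp h0
    have hz : (vecMulVec x y).mulVecLin = 0 := LinearMap.range_eq_bot.mp hbot
    ext k j
    have := congrFun (LinearMap.congr_fun hz (Pi.single j 1)) k
    simpa using this

lemma exists_vecMulVec_of_rank_eq_one {A : Matrix (Fin 3) (Fin 3) ℂ} (h : A.rank = 1) :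
    ∃ a b : Fin 3 → ℂ, A = vecMulVec a b := by
  rw [Matrix.rank] at h
  obtain ⟨v, -, hv⟩ := finrank_eq_one_iff'.mp h
  choose cf hcf using hv
  refine ⟨fun k => (v : Fin 3 → ℂ) k,
    fun j => cf ⟨A.mulVec (Pi.single j 1), LinearMap.mem_range_self _ _⟩, ?_⟩
  ext k j
  have h1 := hcf ⟨A.mulVec (Pi.single j 1), LinearMap.mem_range_self _ _⟩
  have h2 := congrArg (fun w : (LinearMap.range A.mulVecLin) => (w : Fin 3 → ℂ) k) h1
  simp only [Submodule.coe_smul, Pi.smul_apply, smul_eq_mul] at h2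
  have h3 : A.mulVec (Pi.single j 1) k = A k j := by simp
  rw [vecMulVec_apply]
  rw [h3] at h2
  rw [← h2]; ring

/-- Extract scalar (entrywise) equations from a matrix equation about sums of outer products. -/
lemma entry_eq {a b : Fin 4 → Fin 3 → ℂ} {d : Fin 4 → ℂ} {N : Matrix (Fin 3) (Fin 3) ℂ}
    (h : ∑ i, d i • vecMulVec (a i) (b i) = N) (j k : Fin 3) :
    d 0 * (a 0 j * b 0 k) + d 1 * (a 1 j * b 1 k) + d 2 * (a 2 j * b 2 k)
      + d 3 * (a 3 j * b 3 k) = N j k := by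
  rw [← h]
  simp [Matrix.sum_apply, Fin.sum_univ_four, vecMulVec_apply]

set_option maxHeartbeats 2000000 in
/-- The rank of the 3-dimensional space of matrices `{[[t,s,u],[s,0,0],[u,0,0]]}`, i.e. the
smallest `r` such that it is contained in the span of `r` rank-one matrices, equals 5. -/
theorem space_rank_bordered_eq_five :
    IsLeast {r : ℕ | ∃ M : Fin r → Matrix (Fin 3) (Fin 3) ℂ,
        (∀ i, (M i).rank = 1) ∧
        ∀ s t u : ℂ, (!![t, s, u; s, 0, 0; u, 0, 0] : Matrix (Fin 3) (Fin 3) ℂ)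
          ∈ Submodule.span ℂ (Set.range M)} 5 := by
  constructor
  · -- 5 rank-one matrices suffice
    refine ⟨![vecMulVec ![1,1,0] ![1,1,0], vecMulVec ![1,0,1] ![1,0,1],
        vecMulVec ![1,0,0] ![1,0,0], vecMulVec ![0,1,0] ![0,1,0],
        vecMulVec ![0,0,1] ![0,0,1]], ?_, ?_⟩
    · intro i
      fin_cases i
      · exact rank_vecMulVec_eq_one (vecMulVec_ne_zero 0 0 (by norm_num))
      · exact rank_vecMulVec_eq_one (vecMulVec_ne_zero 0 0 (by norm_num))
      · exact rank_vecMulVec_eq_one (vecMulVec_ne_zero 0 0 (by norm_num))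
      · exact rank_vecMulVec_eq_one (vecMulVec_ne_zero 1 1 (by norm_num))
      · exact rank_vecMulVec_eq_one (vecMulVec_ne_zero 2 2 (by norm_num [Matrix.cons_val_two, Matrix.vecHead, Matrix.vecTail]))
    · intro s t u
      rw [Submodule.mem_span_range_iff_exists_fun]
      refine ⟨![s, u, t - s - u, -s, -u], ?_⟩
      rw [Fin.sum_univ_five]
      ext k l
      fin_cases k <;> fin_cases l <;>
        simp [vecMulVec_apply, Matrix.add_apply, Matrix.smul_apply, Matrix.vecHead, Matrix.vecTail]<;> try ring
  · -- lower bound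
    rintro r ⟨M, hrank, hspan⟩
    by_contra hr5
    push_neg at hr5
    have hr4 : r ≤ 4 := by omega
    -- pad to 4 matrices
    set M' : Fin 4 → Matrix (Fin 3) (Fin 3) ℂ := fun i =>
      if h : (i : ℕ) < r then M ⟨i, h⟩ else vecMulVec ![1,0,0] ![1,0,0] with hM'
    have hrank' : ∀ i, (M' i).rank = 1 := by
      intro i
      by_cases h : (i : ℕ) < r
      · simp only [hM', dif_pos h]; exact hrank _
      · simp only [hM', dif_neg h]
        exact rank_vecMulVec_eq_one (vecMulVec_ne_zero 0 0 (by norm_num))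
    have hspan' : ∀ s t u : ℂ, (!![t, s, u; s, 0, 0; u, 0, 0] : Matrix (Fin 3) (Fin 3) ℂ)
        ∈ Submodule.span ℂ (Set.range M') := by
      intro s t u
      refine Submodule.span_mono ?_ (hspan s t u)
      rintro _ ⟨i, rfl⟩
      refine ⟨⟨(i : ℕ), lt_of_lt_of_le i.2 hr4⟩, ?_⟩
      simp only [hM', dif_pos (show ((⟨(i : ℕ), lt_of_lt_of_le i.2 hr4⟩ : Fin 4) : ℕ) < r
        from i.2)]
    choose a b hab using fun i => exists_vecMulVec_of_rank_eq_one (hrank' i)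
    obtain ⟨γ, hγ⟩ := (Submodule.mem_span_range_iff_exists_fun ℂ).mp (hspan' 0 1 0)
    obtain ⟨α, hα⟩ := (Submodule.mem_span_range_iff_exists_fun ℂ).mp (hspan' 1 0 0)
    obtain ⟨β, hβ⟩ := (Submodule.mem_span_range_iff_exists_fun ℂ).mp (hspan' 0 0 1)
    simp only [hab] at hγ hα hβ
    -- the transposed slices
    obtain ⟨c, hc0, hc1, hc2⟩ : ∃ c : Fin 4 → Fin 3 → ℂ,
        (∀ i, c i 0 = γ i) ∧ (∀ i, c i 1 = α i) ∧ (∀ i, c i 2 = β i) :=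
      ⟨fun i => ![γ i, α i, β i], fun _ => rfl, fun _ => rfl, fun _ => rfl⟩
    obtain ⟨p, hp⟩ : ∃ p : Fin 4 → ℂ, ∀ i, p i = a i 0 := ⟨_, fun _ => rfl⟩
    obtain ⟨q, hq⟩ : ∃ q : Fin 4 → ℂ, ∀ i, q i = a i 1 := ⟨_, fun _ => rfl⟩
    obtain ⟨w, hw⟩ : ∃ w : Fin 4 → ℂ, ∀ i, w i = a i 2 := ⟨_, fun _ => rfl⟩
    set ψ : (Fin 4 → ℂ) →ₗ[ℂ] Matrix (Fin 3) (Fin 3) ℂ :=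
      { toFun := fun d => ∑ i, d i • vecMulVec (b i) (c i)
        map_add' := fun d e => by
          simp [add_smul, Finset.sum_add_distrib]
        map_smul' := fun t d => by
          simp [Finset.smul_sum, mul_smul] } with hψdef
    have hψ : ∀ d : Fin 4 → ℂ, ψ d = ∑ i, d i • vecMulVec (b i) (c i) := fun _ => rfl
    have hψs : ∀ i0 : Fin 4, ψ (Pi.single i0 1) = vecMulVec (b i0) (c i0) := by
      intro i0
      rw [hψ]
      simp [Pi.single_apply, ite_smul]
    -- the key re-slicing identity
    have hG : ∀ x y z : ℂ, ψ (x • p + y • q + z • w)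
        = !![x, y, z; 0, x, 0; 0, 0, x] := by
      intro x y z
      rw [hψ]
      ext k l
      rw [Matrix.sum_apply, Fin.sum_univ_four]
      simp only [Pi.add_apply, Pi.smul_apply, smul_eq_mul, Matrix.smul_apply,
        vecMulVec_apply, hp, hq, hw]
      have hfin2 : (⟨2, by norm_num⟩ : Fin 3) = 2 := rfl
      fin_cases k <;> fin_cases l
      · have h0 := entry_eq hγ 0 0
        have h1 := entry_eq hγ 1 0
        have h2 := entry_eq hγ 2 0
        norm_num [hfin2, Fin.reduceFinMk, hc0, hc1, hc2, Matrix.cons_val_two, Matrix.vecHead, Matrix.vecTail] at h0 h1 h2 ⊢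
        linear_combination x * h0 + y * h1 + z * h2
      · have h0 := entry_eq hα 0 0
        have h1 := entry_eq hα 1 0
        have h2 := entry_eq hα 2 0
        norm_num [hfin2, Fin.reduceFinMk, hc0, hc1, hc2, Matrix.cons_val_two, Matrix.vecHead, Matrix.vecTail] at h0 h1 h2 ⊢
        linear_combination x * h0 + y * h1 + z * h2
      · have h0 := entry_eq hβ 0 0
        have h1 := entry_eq hβ 1 0
        have h2 := entry_eq hβ 2 0
        norm_num [hfin2, Fin.reduceFinMk, hc0, hc1, hc2, Matrix.cons_val_two, Matrix.vecHead, Matrix.vecTail] at h0 h1 h2 ⊢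
        linear_combination x * h0 + y * h1 + z * h2
      · have h0 := entry_eq hγ 0 1
        have h1 := entry_eq hγ 1 1
        have h2 := entry_eq hγ 2 1
        norm_num [hfin2, Fin.reduceFinMk, hc0, hc1, hc2, Matrix.cons_val_two, Matrix.vecHead, Matrix.vecTail] at h0 h1 h2 ⊢
        linear_combination x * h0 + y * h1 + z * h2
      · have h0 := entry_eq hα 0 1
        have h1 := entry_eq hα 1 1
        have h2 := entry_eq hα 2 1
        norm_num [hfin2, Fin.reduceFinMk, hc0, hc1, hc2, Matrix.cons_val_two, Matrix.vecHead, Matrix.vecTail] at h0 h1 h2 ⊢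
        linear_combination x * h0 + y * h1 + z * h2
      · have h0 := entry_eq hβ 0 1
        have h1 := entry_eq hβ 1 1
        have h2 := entry_eq hβ 2 1
        norm_num [hfin2, Fin.reduceFinMk, hc0, hc1, hc2, Matrix.cons_val_two, Matrix.vecHead, Matrix.vecTail] at h0 h1 h2 ⊢
        linear_combination x * h0 + y * h1 + z * h2
      · have h0 := entry_eq hγ 0 2
        have h1 := entry_eq hγ 1 2
        have h2 := entry_eq hγ 2 2
        norm_num [hfin2, Fin.reduceFinMk, hc0, hc1, hc2, Matrix.cons_val_two, Matrix.vecHead, Matrix.vecTail] at h0 h1 h2 ⊢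
        linear_combination x * h0 + y * h1 + z * h2
      · have h0 := entry_eq hα 0 2
        have h1 := entry_eq hα 1 2
        have h2 := entry_eq hα 2 2
        norm_num [hfin2, Fin.reduceFinMk, hc0, hc1, hc2, Matrix.cons_val_two, Matrix.vecHead, Matrix.vecTail] at h0 h1 h2 ⊢
        linear_combination x * h0 + y * h1 + z * h2
      · have h0 := entry_eq hβ 0 2
        have h1 := entry_eq hβ 1 2
        have h2 := entry_eq hβ 2 2
        norm_num [hfin2, Fin.reduceFinMk, hc0, hc1, hc2, Matrix.cons_val_two, Matrix.vecHead, Matrix.vecTail] at h0 h1 h2 ⊢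
        linear_combination x * h0 + y * h1 + z * h2
    -- p, q, w are linearly independent
    have li : LinearIndependent ℂ ![p, q, w] := by
      rw [Fintype.linearIndependent_iff]
      intro g hg
      have hg' : g 0 • p + g 1 • q + g 2 • w = 0 := by
        simpa [Fin.sum_univ_three] using hg
      have h0 := hG (g 0) (g 1) (g 2)
      rw [hg', map_zero] at h0
      intro i
      fin_cases i
      · have := Matrix.ext_iff.mpr h0 0 0
        simpa using this.symm
      · have := Matrix.ext_iff.mpr h0 0 1
        simpa using this.symm
      · have := Matrix.ext_iff.mpr h0 0 2
        simpa using this.symm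
    -- a nonzero functional h annihilating p, q, w
    have hkerne : LinearMap.ker ((Matrix.of ![p, q, w]).mulVecLin) ≠ ⊥ := by
      intro hbot
      have hinj : Function.Injective ((Matrix.of ![p, q, w]).mulVecLin) :=
        LinearMap.ker_eq_bot.mp hbot
      have hle := LinearMap.finrank_le_finrank_of_injective hinj
      simp [Module.finrank_pi] at hle
    obtain ⟨h, hhker, hh0⟩ := (Submodule.ne_bot_iff _).mp hkerne
    have hhp : ∑ i, p i * h i = 0 := by
      have := congrFun (LinearMap.mem_ker.mp hhker) 0
      simpa [Matrix.mulVecLin_apply, Matrix.mulVec, dotProduct] using this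
    have hhq : ∑ i, q i * h i = 0 := by
      have := congrFun (LinearMap.mem_ker.mp hhker) 1
      simpa [Matrix.mulVecLin_apply, Matrix.mulVec, dotProduct] using this
    have hhw : ∑ i, w i * h i = 0 := by
      have := congrFun (LinearMap.mem_ker.mp hhker) 2
      simpa [Matrix.mulVecLin_apply, Matrix.mulVec, dotProduct] using this
    obtain ⟨m, hm⟩ : ∃ m, h m ≠ 0 := Function.ne_iff.mp hh0
    -- the functional x ↦ ∑ h i * x i
    set φ : (Fin 4 → ℂ) →ₗ[ℂ] (Fin 1 → ℂ) := (Matrix.of ![h]).mulVecLin with hφdef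
    have hφ : ∀ d : Fin 4 → ℂ, φ d 0 = ∑ i, h i * d i := by
      intro d
      simp [hφdef, Matrix.mulVecLin_apply, Matrix.mulVec, dotProduct]
    have hφsurj : Function.Surjective φ := by
      intro e
      refine ⟨(e 0 / h m) • (Pi.single m 1 : Fin 4 → ℂ), ?_⟩
      funext j
      fin_cases j
      rw [_root_.map_smul]
      simp only [hφdef, Matrix.mulVecLin_apply, Matrix.mulVec_single, Pi.smul_apply,
        smul_eq_mul]
      rw [MulOpposite.op_one, one_smul, Matrix.col_apply, Matrix.of_apply]
      simp only [Matrix.cons_val_zero, Matrix.cons_val_fin_one]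
      field_simp; rfl
    have hkerrank : Module.finrank ℂ (LinearMap.ker φ) = 3 := by
      have h1 := LinearMap.finrank_range_add_finrank_ker φ
      have h2 : LinearMap.range φ = ⊤ := LinearMap.range_eq_top.mpr hφsurj
      rw [h2] at h1
      simp [Module.finrank_pi] at h1 ⊢
      omega
    -- span{p,q,w} = ker φ
    have hphi0 : ∀ v : Fin 4 → ℂ, (∑ i, h i * v i = 0) → φ v = 0 := by
      intro v hv
      funext i1
      fin_cases i1
      show φ v 0 = 0
      rw [hφ, hv]
    have hKle : Submodule.span ℂ (Set.range ![p, q, w]) ≤ LinearMap.ker φ := by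
      rw [Submodule.span_le]
      rintro _ ⟨j, rfl⟩
      rw [SetLike.mem_coe, LinearMap.mem_ker]
      apply hphi0
      fin_cases j
      · simpa [mul_comm] using hhp
      · simpa [mul_comm] using hhq
      · simpa [mul_comm] using hhw
    have hKrank : Module.finrank ℂ (Submodule.span ℂ (Set.range ![p, q, w])) = 3 := by
      rw [finrank_span_eq_card li]
      simp
    have hK : Submodule.span ℂ (Set.range ![p, q, w]) = LinearMap.ker φ :=
      Submodule.eq_of_le_of_finrank_le hKle (by rw [hkerrank, hKrank])
    -- elements of ker φ map into the model space under ψ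
    have hVmem : ∀ d : Fin 4 → ℂ, φ d = 0 → ∃ x y z : ℂ,
        ψ d = !![x, y, z; 0, x, 0; 0, 0, x] := by
      intro d hd
      have hdK : d ∈ Submodule.span ℂ (Set.range ![p, q, w]) := by
        rw [hK]; exact LinearMap.mem_ker.mpr hd
      obtain ⟨g, hg⟩ := (Submodule.mem_span_range_iff_exists_fun ℂ).mp hdK
      have hg' : g 0 • p + g 1 • q + g 2 • w = d := by
        simpa [Fin.sum_univ_three] using hg
      exact ⟨g 0, g 1, g 2, by rw [← hg']; exact hG (g 0) (g 1) (g 2)⟩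
    -- key entry fact : h m * (R i)₀₀ = h i * (R m)₀₀
    have hx : ∀ i : Fin 4, h m * (b i 0 * c i 0) = h i * (b m 0 * c m 0) := by
      intro i
      have hdker : φ (h m • (Pi.single i 1 : Fin 4 → ℂ) - h i • (Pi.single m 1 : Fin 4 → ℂ))
          = 0 := by
        rw [map_sub, _root_.map_smul, _root_.map_smul]
        funext j
        fin_cases j
        show h m • φ (Pi.single i 1) 0 - h i • φ (Pi.single m 1) 0 = 0
        rw [hφ, hφ]
        simp only [smul_eq_mul, Finset.mul_sum]
        rw [← Finset.sum_sub_distrib]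
        rw [Fin.sum_univ_four]
        rcases i with ⟨iv, hiv⟩
        rcases m with ⟨mv, hmv⟩
        interval_cases iv <;> interval_cases mv <;>
          simp [Pi.single_apply] <;> ring
      obtain ⟨x, y, z, hxyz⟩ := hVmem _ hdker
      have hψd : ψ (h m • (Pi.single i 1 : Fin 4 → ℂ) - h i • (Pi.single m 1 : Fin 4 → ℂ))
          = h m • vecMulVec (b i) (c i) - h i • vecMulVec (b m) (c m) := by
        rw [map_sub, _root_.map_smul, _root_.map_smul, hψs, hψs]
      -- determinant is zero since ψ d is a sum of two rank ones
      have hdet0 : (ψ (h m • (Pi.single i 1 : Fin 4 → ℂ)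
          - h i • (Pi.single m 1 : Fin 4 → ℂ))).det = 0 := by
        rw [hψd]
        have hsplit : h m • vecMulVec (b i) (c i) - h i • vecMulVec (b m) (c m)
            = vecMulVec (fun k => h m * b i k) (c i)
              + vecMulVec (fun k => -(h i) * b m k) (c m) := by
          ext k l
          simp only [Matrix.sub_apply, Matrix.add_apply, Matrix.smul_apply,
            vecMulVec_apply, smul_eq_mul]
          ring
        rw [hsplit]
        exact det_sum_two_vecMulVec _ _ _ _
      -- determinant of the model form is x³
      have hx0 : x = 0 := by
        have hdetx : x ^ 3 = 0 := by
          rw [← hdet0, hxyz]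
          simp [Matrix.det_fin_three, Matrix.vecHead, Matrix.vecTail]
          ring
        exact pow_eq_zero_iff (by norm_num) |>.mp hdetx
      -- entry (0,0)
      have hent := Matrix.ext_iff.mpr (hψd.symm.trans hxyz) 0 0
      rw [hx0] at hent
      simp only [Matrix.sub_apply, Matrix.smul_apply, vecMulVec_apply, smul_eq_mul] at hent
      norm_num at hent
      linear_combination hent
    -- entry (0,0) of ψ p = 1
    have hψp : ∑ i, p i * (b i 0 * c i 0) = 1 := by
      have h1 := hG 1 0 0
      rw [hψ] at h1
      have h2 := Matrix.ext_iff.mpr h1 0 0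
      rw [Matrix.sum_apply] at h2
      norm_num [vecMulVec_apply] at h2
      rw [← h2]
      try refine Finset.sum_congr rfl fun i _ => by ring
    -- final contradiction
    apply hm
    rw [Fin.sum_univ_four] at hψp hhp
    linear_combination (-(h m)) * hψp + p 0 * hx 0 + p 1 * hx 1 + p 2 * hx 2 + p 3 * hx 3
      + (b m 0 * c m 0) * hhp
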